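/- arXiv:2511.12398 — 2 statements merged into one kernel-verified Lean document; each statement's English description precedes it below -/
import Mathlib

section
/- The energy-based sparse grid index set X_n is symmetric: for any l = (l_1,…,l_d) ∈ X_n and any permutation τ ∈ S_d, one has τ(l) = (l_{τ(1)},…,l_{τ(d)}) ∈ X_n. Moreover, the total number of grid points in the symmetric sparse grid satisfies |⋃_{l ∈ X_n ∩ ℕ^d_ord} i_l| ≤ C_s · 2^n · e^{π√(5d/3)}, where C_s > 0 is a constant independent of both n and d. -/
open MeasureTheory Real Finset
open scoped Classical

noncomputable section

/-- The squared ReLU activation function. -/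
def sqReLU (x : ℝ) : ℝ := (max 0 x) ^ 2

/-- A feedforward neural network: `depth` hidden layers, layer dimensions `dims`
(`dims 0` is the input dimension, `dims (depth+1)` the output dimension),
weight matrices `W` and bias vectors `b`. -/
structure SqNet where
  depth : ℕ
  dims : ℕ → ℕ
  W : ∀ i, Matrix (Fin (dims (i + 1))) (Fin (dims i)) ℝ
  b : ∀ i, Fin (dims (i + 1)) → ℝ

namespace SqNet

/-- Output of the `i`-th hidden layer (with squared ReLU activation). -/
def hiddenF (net : SqNet) (x : Fin (net.dims 0) → ℝ) : (i : ℕ) → Fin (net.dims i) → ℝ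
  | 0 => x
  | i + 1 => fun j => sqReLU ((∑ k, net.W i j k * hiddenF net x i k) + net.b i j)

/-- The output of the network: a final affine layer without activation. -/
def out (net : SqNet) (x : Fin (net.dims 0) → ℝ) : Fin (net.dims (net.depth + 1)) → ℝ :=
  fun j => (∑ k, net.W net.depth j k * net.hiddenF x net.depth k) + net.b net.depth j

/-- The width of a network: the maximal dimension of a hidden layer. -/
def width (net : SqNet) : ℕ := (Finset.range net.depth).sup fun i => net.dims (i + 1)

/-- Total number of (hidden) neurons. -/
def numNeurons (net : SqNet) : ℕ := ∑ i ∈ Finset.range net.depth, net.dims (i + 1)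

/-- Total number of parameters (weights and biases). -/
def numParams (net : SqNet) : ℕ :=
  ∑ i ∈ Finset.range (net.depth + 1), (net.dims (i + 1) * net.dims i + net.dims (i + 1))

/-- The network `net` computes the scalar function `f` on `ℝ^d`. -/
def Realizes (net : SqNet) {d : ℕ} (f : (Fin d → ℝ) → ℝ) : Prop :=
  ∃ (h0 : net.dims 0 = d) (h1 : net.dims (net.depth + 1) = 1),
    ∀ x : Fin d → ℝ, f x = net.out (fun k => x (Fin.cast h0 k)) ⟨0, by omega⟩

end SqNet

/-- The unit cube `Ω = [0,1]^d`. -/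
def unitCube (d : ℕ) : Set (Fin d → ℝ) := Set.univ.pi fun _ => Set.Icc 0 1

/-- Lebesgue measure restricted to the unit cube. -/
def cubeMeasure (d : ℕ) : Measure (Fin d → ℝ) := volume.restrict (unitCube d)

/-- Partial derivative in the `j`-th coordinate direction. -/
def pderiv1 {d : ℕ} (j : Fin d) (f : (Fin d → ℝ) → ℝ) : (Fin d → ℝ) → ℝ :=
  fun x => fderiv ℝ f x (Pi.single j 1)

/-- Iterated partial derivative in direction `j`. -/
def pderivIter {d : ℕ} (j : Fin d) : ℕ → ((Fin d → ℝ) → ℝ) → ((Fin d → ℝ) → ℝ)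
  | 0, f => f
  | n + 1, f => pderiv1 j (pderivIter j n f)

/-- Mixed derivative `D^k f` for a multi-index `k`. -/
def mixedDeriv {d : ℕ} (k : Fin d → ℕ) (f : (Fin d → ℝ) → ℝ) : (Fin d → ℝ) → ℝ :=
  (List.ofFn fun j : Fin d => pderivIter j (k j)).foldr (fun F g => F g) f

/-- The Korobov semi-norm `|f|_{2,2} = ‖∂^{2d} f/(∂x_1^2 ⋯ ∂x_d^2)‖_{L^2(Ω)}`. -/
def korobovSeminorm (d : ℕ) (f : (Fin d → ℝ) → ℝ) : ℝ :=
  (∫ x, (mixedDeriv (fun _ => 2) f x) ^ 2 ∂cubeMeasure d) ^ (1 / 2 : ℝ)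

/-- The energy norm `‖f‖_E = (∫_Ω Σ_j (∂f/∂x_j)^2)^{1/2}`. -/
def energyNorm (d : ℕ) (f : (Fin d → ℝ) → ℝ) : ℝ :=
  (∫ x, ∑ j, (pderiv1 j f x) ^ 2 ∂cubeMeasure d) ^ (1 / 2 : ℝ)

/-- Membership in the Korobov space `X^{2,2}([0,1]^d)`: `f ∈ L^2`, `f` vanishes on the
boundary, and all mixed derivatives `D^k f` with `|k|_∞ ≤ 2` are in `L^2`. -/
def MemKorobov (d : ℕ) (f : (Fin d → ℝ) → ℝ) : Prop :=
  MemLp f 2 (cubeMeasure d) ∧ (∀ x ∈ frontier (unitCube d), f x = 0) ∧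
    ∀ k : Fin d → ℕ, (∀ j, k j ≤ 2) → MemLp (mixedDeriv k f) 2 (cubeMeasure d)

/-- A function of `d` variables is symmetric if it is invariant under permutations
of its arguments. -/
def IsSymmetricFun (d : ℕ) (f : (Fin d → ℝ) → ℝ) : Prop :=
  ∀ (τ : Equiv.Perm (Fin d)) (x : Fin d → ℝ), f (fun i => x (τ i)) = f x

/-- The standard hat function: `1 - |x|` on `[-1,1]`, `0` otherwise. -/
def hatFn (x : ℝ) : ℝ := if |x| ≤ 1 then 1 - |x| else 0

/-- Scaled and translated hat function `φ_{l,i}(x) = φ((x - i 2^{-l})/2^{-l}) = φ(2^l x - i)`. -/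
def hat1 (l i : ℕ) (x : ℝ) : ℝ := hatFn ((2 : ℝ) ^ l * x - i)

/-- Tensor-product sparse grid basis function `φ_{l,i}`. -/
def gridBasis {d : ℕ} (l i : Fin d → ℕ) (x : Fin d → ℝ) : ℝ := ∏ j, hat1 (l j) (i j) (x j)

/-- Symmetrized sparse grid basis function `ψ_{l,i}(x) = Σ_{τ ∈ S_d} φ_{l,i}(τ(x))`. -/
def symBasis (d : ℕ) (l i : Fin d → ℕ) (x : Fin d → ℝ) : ℝ :=
  ∑ τ : Equiv.Perm (Fin d), gridBasis l i fun j => x (τ j)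

/-- The index set `i_l = {i : 1 ≤ i ≤ 2^l - 1, all i_j odd}`. -/
def gridIdx {d : ℕ} (l : Fin d → ℕ) : Finset (Fin d → ℕ) :=
  Fintype.piFinset fun j => (Finset.Icc 1 (2 ^ l j - 1)).filter fun m => Odd m

/-- The hierarchical coefficient `v_{l,i} = ∫_Ω φ_{l,i}(x) D^{(2,…,2)} f(x) dx`. -/
def gridCoeff (d : ℕ) (f : (Fin d → ℝ) → ℝ) (l i : Fin d → ℕ) : ℝ :=
  ∫ x, gridBasis l i x * mixedDeriv (fun _ => 2) f x ∂cubeMeasure d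

/-- The defining condition of the energy-based sparse-grid index set `X_n`. -/
def XnCond (d n : ℕ) (l : Fin d → ℕ) : Prop :=
  (∀ j, 1 ≤ l j) ∧
    (∑ j, (l j : ℝ)) - (1 / 5) * Real.logb 2 (∑ j, (4 : ℝ) ^ l j) ≤
      ((n : ℝ) + d - 1) - (1 / 5) * Real.logb 2 ((4 : ℝ) ^ n + 4 * d - 4)

/-- The energy-based sparse-grid index set `X_n` (as a finite set; by Lemma 3.9
its elements satisfy `|l|_1 ≤ n + d - 1`, so they lie in the box `[1, n+d]^d`). -/
def XnFinset (d n : ℕ) : Finset (Fin d → ℕ) :=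
  (Fintype.piFinset fun _ : Fin d => Finset.Icc 1 (n + d)).filter fun l => XnCond d n l

/-- The ordered (nondecreasing) level indices in `X_n`, i.e. `X_n ∩ ℕ^d_ord`. -/
def XnOrdFinset (d n : ℕ) : Finset (Fin d → ℕ) :=
  (XnFinset d n).filter fun l => ∀ j j' : Fin d, j ≤ j' → l j ≤ l j'

/-- The `H^1` norm on the cube `[0,1]^d`. -/
def H1normCube (d : ℕ) (u : (Fin d → ℝ) → ℝ) : ℝ :=
  ((∫ x, (u x) ^ 2 ∂cubeMeasure d) + ∑ s, ∫ x, (pderiv1 s u x) ^ 2 ∂cubeMeasure d) ^ (1 / 2 : ℝ)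

/-- The `H^1` norm of a univariate function on a set `s ⊆ ℝ`. -/
def H1normOn (s : Set ℝ) (u : ℝ → ℝ) : ℝ :=
  ((∫ x in s, (u x) ^ 2) + ∫ x in s, (deriv u x) ^ 2) ^ (1 / 2 : ℝ)

/-- Membership in `H^1([0,1])`: the function and its derivative are in `L^2([0,1])`. -/
def MemH1I (u : ℝ → ℝ) : Prop :=
  MemLp u 2 (volume.restrict (Set.Icc (0 : ℝ) 1)) ∧
    MemLp (deriv u) 2 (volume.restrict (Set.Icc (0 : ℝ) 1))

/-- The ReLU function. -/
def reluFn (x : ℝ) : ℝ := max 0 x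

/-- `S_δ(x) = (σ(x) - σ(x-δ))/(2δ)` where `σ` is the squared ReLU. -/
def Sdelta (δ x : ℝ) : ℝ := (sqReLU x - sqReLU (x - δ)) / (2 * δ)

/-- The hypothesis class `F_{m,L}`: sums of `m` squared ReLU networks of width `3d^2`
and depth `⌊log₂ d⌋ + 2`, with gradient bounded by `L` on the cube. -/
def Fclass (d m : ℕ) (L : ℝ) : Set ((Fin d → ℝ) → ℝ) :=
  {φ | (∃ s : Fin m → ((Fin d → ℝ) → ℝ),
          (φ = fun x => ∑ i, s i x) ∧
          ∀ i, ∃ net : SqNet,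
            net.Realizes (s i) ∧ net.width ≤ 3 * d ^ 2 ∧ net.depth = Nat.log 2 d + 2) ∧
       ∀ x ∈ unitCube d, ∀ k, |pderiv1 k φ x| ≤ L}

/-- The class of `k`-th partial derivatives of members of `F_{m,L}`. -/
def pdClass (d m : ℕ) (L : ℝ) (k : Fin d) : Set ((Fin d → ℝ) → ℝ) :=
  pderiv1 k '' Fclass d m L

/-- The empirical loss `E_S(f) = (1/M) Σ_j |∇f(x_j) - y_j|^2`. -/
def empLoss (d M : ℕ) (S : Fin M → (Fin d → ℝ) × (Fin d → ℝ))
    (f : (Fin d → ℝ) → ℝ) : ℝ :=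
  (1 / M) * ∑ j, ∑ k, (pderiv1 k f (S j).1 - (S j).2 k) ^ 2

/-- Covering number (at scale `ε`, sup-norm) of a set of vectors in `ℝ^n`. -/
def coverNum (n : ℕ) (ε : ℝ) (T : Set (Fin n → ℝ)) : ℝ :=
  sInf {r : ℝ | ∃ c : Finset (Fin n → ℝ), (c.card : ℝ) = r ∧
    T ⊆ ⋃ v ∈ c, {w | ∀ i, |w i - v i| ≤ ε}}

/-- Uniform covering number `N(ε, G, n)` of a function class `G` over `n` sample points. -/
def unifCoverNum {X : Type*} (ε : ℝ) (G : Set (X → ℝ)) (n : ℕ) : ℝ :=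
  sSup {r : ℝ | ∃ Z : Fin n → X, r = coverNum n ε ((fun u => fun i : Fin n => u (Z i)) '' G)}

end

section XnAuxSection
open Finset Real

namespace XnAux

lemma rpow2_le_iff (y c : ℝ) (hc : 0 ≤ c) (k : ℕ) (hk : k ≠ 0) :
    (2:ℝ)^y ≤ c ↔ (2:ℝ)^(y*k) ≤ c^k := by
  rw [Real.rpow_mul (by norm_num), Real.rpow_natCast]
  exact (pow_le_pow_iff_left₀ (Real.rpow_nonneg (by norm_num) _) hc hk).symm

lemma le_rpow2_iff (y c : ℝ) (hc : 0 ≤ c) (k : ℕ) (hk : k ≠ 0) :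
    c ≤ (2:ℝ)^y ↔ c^k ≤ (2:ℝ)^(y*k) := by
  rw [Real.rpow_mul (by norm_num), Real.rpow_natCast]
  exact (pow_le_pow_iff_left₀ hc (Real.rpow_nonneg (by norm_num) _) hk).symm

lemma two_rpow_neg_one : (2:ℝ)^(-1:ℝ) = 1/2 := by
  rw [Real.rpow_neg (by norm_num), Real.rpow_one]; norm_num

lemma N1 : (2:ℝ)^(-(1/3):ℝ) ≤ 4/5 := by
  rw [rpow2_le_iff _ _ (by norm_num) 3 (by norm_num)]
  rw [show (-(1/3):ℝ)*(3:ℕ) = -1 by push_cast; ring, two_rpow_neg_one]; norm_num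

lemma N2 : (2:ℝ)^((1/5):ℝ) ≤ 6/5 := by
  rw [rpow2_le_iff _ _ (by norm_num) 5 (by norm_num)]
  rw [show ((1/5):ℝ)*(5:ℕ) = 1 by push_cast; ring, Real.rpow_one]; norm_num

lemma N3 : (9/8:ℝ) ≤ (2:ℝ)^((1/5):ℝ) := by
  rw [le_rpow2_iff _ _ (by norm_num) 5 (by norm_num)]
  rw [show ((1/5):ℝ)*(5:ℕ) = 1 by push_cast; ring, Real.rpow_one]; norm_num

lemma N4 : (2:ℝ)^(-(2/15):ℝ) ≤ 93/100 := by
  rw [rpow2_le_iff _ _ (by norm_num) 15 (by norm_num)]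
  rw [show (-(2/15):ℝ)*(15:ℕ) = -2 by push_cast; ring, Real.rpow_neg (by norm_num),
    show ((2:ℝ))^(2:ℝ) = 4 by rw [show (2:ℝ) = ((2:ℕ):ℝ) by norm_num, Real.rpow_natCast]; norm_num]
  norm_num

end XnAux

namespace XnAux2
open XnAux

def Lf (d : ℕ) (l : Fin (d+1) → ℕ) (i : ℕ) : ℕ :=
  l ⟨min i d, lt_of_le_of_lt (min_le_right _ _) (Nat.lt_succ_self d)⟩

def Bf (d : ℕ) (l : Fin (d+1) → ℕ) : ℕ → ℕ
  | 0 => 1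
  | (t+1) => Lf d l t

def Uf (d : ℕ) (l : Fin (d+1) → ℕ) (i : ℕ) : ℕ := Bf d l (i+1) - Bf d l i

section
variable {d : ℕ} {l : Fin (d+1) → ℕ}

lemma Lf_mono (Hmono : ∀ j j' : Fin (d+1), j ≤ j' → l j ≤ l j') : Monotone (Lf d l) := by
  intro i j hij
  exact Hmono _ _ (by simp [Fin.le_def]; omega)

lemma Bf_mono (Hmono : ∀ j j' : Fin (d+1), j ≤ j' → l j ≤ l j')
    (Hone : ∀ j, 1 ≤ l j) : Monotone (Bf d l) := by
  apply monotone_nat_of_le_succ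
  intro t
  cases t with
  | zero => exact Hone _
  | succ t => exact Lf_mono Hmono (Nat.le_succ t)

lemma Bf_one (Hone : ∀ j, 1 ≤ l j) (t : ℕ) : 1 ≤ Bf d l t := by
  cases t with
  | zero => exact le_refl _
  | succ t => exact Hone _

lemma sum_Uf (Hmono : ∀ j j' : Fin (d+1), j ≤ j' → l j ≤ l j')
    (Hone : ∀ j, 1 ≤ l j) (t : ℕ) :
    1 + ∑ i ∈ range t, Uf d l i = Bf d l t := by
  induction t with
  | zero => rfl
  | succ t ih =>
    rw [Finset.sum_range_succ, ← add_assoc, ih]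
    have h1 : Bf d l t ≤ Bf d l (t+1) := Bf_mono Hmono Hone (Nat.le_succ t)
    have h2 : Uf d l t = Bf d l (t+1) - Bf d l t := rfl
    omega

lemma Bf_succ_eq (t : ℕ) (ht : t ≤ d) :
    Bf d l (t+1) = l ⟨t, by omega⟩ := by
  show Lf d l t = _
  unfold Lf
  congr 1
  simp [Fin.ext_iff]
  omega

lemma sum_Uf_last (Hmono : ∀ j j' : Fin (d+1), j ≤ j' → l j ≤ l j')
    (Hone : ∀ j, 1 ≤ l j) :
    1 + ∑ i ∈ range (d+1), Uf d l i = l (Fin.last d) := by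
  rw [sum_Uf Hmono Hone, Bf_succ_eq d (le_refl d)]
  rfl

lemma weighted_sum (Hmono : ∀ j j' : Fin (d+1), j ≤ j' → l j ≤ l j')
    (Hone : ∀ j, 1 ≤ l j) :
    ∑ i ∈ range (d+1), (d - i) * Uf d l i
      = ∑ j ∈ range d, (Bf d l (j+1) - 1) := by
  have step1 : ∀ i ∈ range (d+1),
      (d - i) * Uf d l i = ∑ j ∈ range d, (if i ≤ j then Uf d l i else 0) := by
    intro i hi
    rw [← Finset.sum_filter]
    rw [Finset.sum_const]
    have hc : (Finset.filter (fun j => i ≤ j) (range d)).card = d - i := by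
      rw [show Finset.filter (fun j => i ≤ j) (range d) = Finset.Ico i d by
        ext j; simp [Finset.mem_Ico, Finset.mem_filter, Finset.mem_range]; omega]
      exact Nat.card_Ico i d
    rw [hc]; simp [mul_comm]
  rw [Finset.sum_congr rfl step1, Finset.sum_comm]
  apply Finset.sum_congr rfl
  intro j hj
  simp only [Finset.mem_range] at hj
  rw [← Finset.sum_filter]
  rw [show Finset.filter (fun i => i ≤ j) (range (d+1)) = range (j+1) by
    ext i; simp [Finset.mem_filter, Finset.mem_range]; omega]
  have := sum_Uf Hmono Hone (j+1)
  omega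

end

end XnAux2

namespace XnAux3
open XnAux XnAux2

lemma geom_le {r : ℝ} (h0 : 0 ≤ r) (h1 : r < 1) (N : ℕ) :
    ∑ u ∈ range N, r ^ u ≤ (1 - r)⁻¹ := by
  have hne : r ≠ 1 := ne_of_lt h1
  have h2 : (0:ℝ) < 1 - r := by linarith
  rw [geom_sum_eq hne]
  have h3 : (r ^ N - 1) / (r - 1) = (1 - r ^ N) / (1 - r) := by
    rw [← neg_div_neg_eq]; congr 1 <;> ring
  rw [h3, inv_eq_one_div]
  gcongr
  · nlinarith [pow_nonneg h0 N]

lemma inv_le_exp {r : ℝ} (h0 : 0 < r) (h1 : r ≤ 93/100) :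
    (1 - r)⁻¹ ≤ Real.exp (16 * r) := by
  have hpos : (0:ℝ) < 1 - r := by linarith
  have he : 1 + 16*r ≤ Real.exp (16*r) := by
    have := Real.add_one_le_exp (16*r); linarith
  have h : 1 ≤ (1 - r) * Real.exp (16 * r) := by nlinarith
  calc (1-r)⁻¹ ≤ (1-r)⁻¹ * ((1-r) * Real.exp (16*r)) := by
        nlinarith [inv_pos.mpr hpos]
    _ = Real.exp (16*r) := by field_simp

lemma card_odd_le (L : ℕ) (hL : 1 ≤ L) :
    ((Finset.Icc 1 (2^L - 1)).filter (fun m => Odd m)).card ≤ 2^(L-1) := by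
  have h : ((Finset.Icc 1 (2^L - 1)).filter (fun m => Odd m)).card
      ≤ (Finset.range (2^(L-1))).card := by
    apply Finset.card_le_card_of_injOn (fun m => m / 2)
    · intro m hm
      simp only [Finset.mem_coe, Finset.mem_filter, Finset.mem_Icc] at hm
      obtain ⟨⟨h1, h2⟩, h3⟩ := hm
      rw [Finset.mem_coe, Finset.mem_range]
      show m / 2 < 2^(L-1)
      have h4 : m % 2 = 1 := Nat.odd_iff.mp h3
      have h5 : 2^L = 2 * 2^(L-1) := by
        rw [← pow_succ']
        congr 1; omega
      omega
    · intro m hm m' hm' hmm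
      simp only [Finset.mem_coe, Finset.mem_filter, Finset.mem_Icc] at hm hm'
      have h4 : m % 2 = 1 := Nat.odd_iff.mp hm.2
      have h5 : m' % 2 = 1 := Nat.odd_iff.mp hm'.2
      have h6 : m / 2 = m' / 2 := hmm
      omega
  simpa using h

lemma gridIdx_card_le {d : ℕ} (l : Fin d → ℕ) (hone : ∀ j, 1 ≤ l j) :
    (gridIdx l).card ≤ 2 ^ (∑ j, (l j - 1)) := by
  rw [gridIdx, Fintype.card_piFinset]
  calc ∏ j, ((Finset.Icc 1 (2^(l j) - 1)).filter (fun m => Odd m)).card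
      ≤ ∏ j, 2^(l j - 1) := Finset.prod_le_prod' (fun j _ => card_odd_le (l j) (hone j))
    _ = 2 ^ (∑ j, (l j - 1)) := by rw [← Finset.prod_pow_eq_pow_sum]

end XnAux3

namespace XnAux4
open XnAux XnAux2 XnAux3

lemma erase_sum_eq (d : ℕ) (F : Fin (d+1) → ℝ) :
    ∑ j ∈ Finset.univ.erase (Fin.last d), F j
      = ∑ j ∈ range d,
          F ⟨min j d, lt_of_le_of_lt (min_le_right _ _) (Nat.lt_succ_self d)⟩ := by
  have h1 : ∑ j ∈ Finset.univ.erase (Fin.last d), F j + F (Fin.last d) = ∑ j, F j :=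
    Finset.sum_erase_add _ _ (Finset.mem_univ _)
  have h2 : ∑ j : Fin (d+1), F j
      = ∑ j ∈ range (d+1),
          F ⟨min j d, lt_of_le_of_lt (min_le_right _ _) (Nat.lt_succ_self d)⟩ := by
    rw [← Fin.sum_univ_eq_sum_range
      (fun j => F ⟨min j d, lt_of_le_of_lt (min_le_right _ _) (Nat.lt_succ_self d)⟩) (d+1)]
    apply Finset.sum_congr rfl
    intro i _
    congr 1
    exact Fin.ext (by simp [Fin.is_le i])
  rw [Finset.sum_range_succ] at h2
  have h3 : F ⟨min d d, lt_of_le_of_lt (min_le_right _ _) (Nat.lt_succ_self d)⟩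
      = F (Fin.last d) := by
    congr 1
    exact Fin.ext (by simp [Fin.last])
  rw [h2, h3] at h1
  linarith

lemma logb_two_pow (k : ℕ) : Real.logb 2 ((2:ℝ)^k) = k := by
  rw [← Real.rpow_natCast 2 k, Real.logb_rpow (by norm_num) (by norm_num)]

lemma key_ineq (d n : ℕ) (l : Fin (d+1) → ℕ)
    (Hmono : ∀ j j' : Fin (d+1), j ≤ j' → l j ≤ l j')
    (Hcond : XnCond (d+1) n l) :
    3*((l (Fin.last d) : ℝ) - 1)
      + 5*(∑ j ∈ Finset.univ.erase (Fin.last d), ((l j:ℝ) - 1))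
      ≤ 3*n - 3 + Real.logb 2 ((d+1:ℕ):ℝ) := by
  obtain ⟨Hone, Hc⟩ := Hcond
  set L := l (Fin.last d) with hL
  have hdpos : (0:ℝ) < ((d+1:ℕ):ℝ) := by positivity
  have hsum4 : ∑ j, (4:ℝ)^(l j) ≤ ((d+1:ℕ):ℝ) * 4^L := by
    calc ∑ j, (4:ℝ)^(l j) ≤ ∑ _j : Fin (d+1), (4:ℝ)^L := by
          apply Finset.sum_le_sum
          intro j _
          exact pow_le_pow_right₀ (by norm_num) (Hmono j (Fin.last d) (Fin.le_last j))
      _ = ((d+1:ℕ):ℝ) * 4^L := by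
          rw [Finset.sum_const, Finset.card_univ, Fintype.card_fin, nsmul_eq_mul]
  have hsum4pos : (0:ℝ) < ∑ j, (4:ℝ)^(l j) := by
    apply Finset.sum_pos (fun j _ => by positivity) Finset.univ_nonempty
  have hlog1 : Real.logb 2 (∑ j, (4:ℝ)^(l j))
      ≤ Real.logb 2 ((d+1:ℕ):ℝ) + 2*L := by
    calc Real.logb 2 (∑ j, (4:ℝ)^(l j))
        ≤ Real.logb 2 (((d+1:ℕ):ℝ) * 4^L) :=
          Real.logb_le_logb_of_le (by norm_num) hsum4pos hsum4
      _ = Real.logb 2 ((d+1:ℕ):ℝ) + Real.logb 2 ((4:ℝ)^L) := by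
          rw [Real.logb_mul (ne_of_gt hdpos) (by positivity)]
      _ = Real.logb 2 ((d+1:ℕ):ℝ) + 2*L := by
          rw [show (4:ℝ) = 2^2 by norm_num, ← pow_mul, logb_two_pow]
          push_cast; ring
  have hlog2 : 2*(n:ℝ) ≤ Real.logb 2 ((4:ℝ)^n + 4*((d+1:ℕ):ℝ) - 4) := by
    have h4 : (4:ℝ)^n ≤ (4:ℝ)^n + 4*((d+1:ℕ):ℝ) - 4 := by
      have : (1:ℝ) ≤ ((d+1:ℕ):ℝ) := by push_cast; linarith
      linarith
    calc 2*(n:ℝ) = Real.logb 2 ((4:ℝ)^n) := by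
          rw [show (4:ℝ) = 2^2 by norm_num, ← pow_mul, logb_two_pow]; push_cast; ring
      _ ≤ _ := Real.logb_le_logb_of_le (by norm_num) (by positivity) h4
  have hsplit : ∑ j, ((l j:ℝ)) =
      (∑ j ∈ Finset.univ.erase (Fin.last d), ((l j:ℝ))) + L := by
    rw [Finset.sum_erase_add _ _ (Finset.mem_univ _)]
  have hcard : ∑ j ∈ Finset.univ.erase (Fin.last d), (1:ℝ) = d := by
    rw [Finset.sum_const, Finset.card_erase_of_mem (Finset.mem_univ _),
      Finset.card_univ, Fintype.card_fin]
    simp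
  have hsubsum : ∑ j ∈ Finset.univ.erase (Fin.last d), ((l j:ℝ) - 1)
      = (∑ j ∈ Finset.univ.erase (Fin.last d), ((l j:ℝ))) - d := by
    rw [Finset.sum_sub_distrib, hcard]
  rw [hsubsum]
  have Hc' := Hc
  have hcast : ((n:ℝ) + ((d+1:ℕ):ℝ) - 1) - (1/5) * Real.logb 2 ((4:ℝ)^n + 4*((d+1:ℕ):ℝ) - 4)
      = ((n:ℝ) + ((d+1:ℕ):ℝ) - 1) - (1/5) * Real.logb 2 ((4:ℝ)^n + 4*((d+1:ℕ):ℝ) - 4) := rfl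
  -- combine
  have := Hc
  push_cast at this hsplit hsubsum hlog1 hlog2 ⊢
  linarith

end XnAux4

namespace XnMain
open XnAux XnAux2 XnAux3 XnAux4

noncomputable def rr (t : ℕ) : ℝ := (2:ℝ) ^ ((1/5:ℝ) - (t:ℝ)/3)

lemma rr_pos (t : ℕ) : 0 < rr t := Real.rpow_pos_of_pos (by norm_num) _

lemma rr_le (t : ℕ) (ht : 1 ≤ t) : rr t ≤ 93/100 := by
  have h1 : rr t ≤ (2:ℝ)^(-(2/15):ℝ) := by
    apply Real.rpow_le_rpow_of_exponent_le (by norm_num)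
    have : (1:ℝ) ≤ t := by exact_mod_cast ht
    linarith
  exact h1.trans N4

lemma rr_eq (t : ℕ) : rr t = (2:ℝ)^((1/5):ℝ) * ((2:ℝ)^(-(1/3):ℝ))^t := by
  rw [← Real.rpow_natCast ((2:ℝ)^(-(1/3):ℝ)) t, ← Real.rpow_mul (by norm_num),
    ← Real.rpow_add (by norm_num)]
  unfold rr; congr 1; ring

lemma rr_zero : rr 0 = (2:ℝ)^((1/5):ℝ) := by unfold rr; norm_num

lemma logb_le_natlog (d : ℕ) :
    Real.logb 2 ((d+1:ℕ):ℝ) ≤ (Nat.log 2 (d+1) : ℝ) + 1 := by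
  have hdpos : (0:ℝ) < ((d+1:ℕ):ℝ) := by positivity
  rw [Real.logb_le_iff_le_rpow (by norm_num) hdpos]
  rw [show ((Nat.log 2 (d+1):ℝ) + 1) = (((Nat.log 2 (d+1) + 1 : ℕ)):ℝ) by push_cast; ring]
  rw [Real.rpow_natCast]
  exact_mod_cast (Nat.lt_pow_succ_log_self (by norm_num) (d+1)).le

lemma dim_le_exp (d : ℕ) :
    ((d+1:ℕ):ℝ) ≤ Real.exp (Real.pi * Real.sqrt (5*((d+1:ℕ):ℝ)/3)) := by
  set x : ℝ := ((d+1:ℕ):ℝ) with hx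
  have hx1 : (1:ℝ) ≤ x := by rw [hx]; push_cast; linarith
  have hx0 : (0:ℝ) ≤ x := by linarith
  set s := Real.sqrt x with hsdef
  have hs0 : 0 ≤ s := Real.sqrt_nonneg x
  have hs2 : s^2 = x := Real.sq_sqrt hx0
  have h1 : x ≤ Real.exp (2*s) := by
    have ha : 1 + s ≤ Real.exp s := by
      have := Real.add_one_le_exp s; linarith
    have hb : Real.exp (2*s) = Real.exp s * Real.exp s := by
      rw [← Real.exp_add]; ring_nf
    nlinarith [Real.exp_pos s]
  have h2 : 2*s ≤ Real.pi * Real.sqrt (5*x/3) := by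
    have hsq : (2/3)*s ≤ Real.sqrt (5*x/3) := by
      have e1 : Real.sqrt ((4/9)*x) = (2/3)*s := by
        rw [Real.sqrt_mul (by norm_num : (0:ℝ) ≤ 4/9) x,
          show (4/9:ℝ) = (2/3)^2 by norm_num, Real.sqrt_sq (by norm_num : (0:ℝ) ≤ 2/3)]
      rw [← e1]
      apply Real.sqrt_le_sqrt
      linarith
    have hpi : (3:ℝ) ≤ Real.pi := by
      have := Real.pi_gt_three; linarith
    calc 2*s = 3*((2/3)*s) := by ring
      _ ≤ Real.pi * Real.sqrt (5*x/3) := by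
          apply mul_le_mul hpi hsq (by positivity) (by linarith)
  exact h1.trans (Real.exp_le_exp.mpr h2)

end XnMain

namespace XnMain2
open XnAux XnAux2 XnAux3 XnAux4 XnMain

lemma erase_sum_eq_nat (d : ℕ) (F : Fin (d+1) → ℕ) :
    ∑ j ∈ Finset.univ.erase (Fin.last d), F j
      = ∑ j ∈ range d,
          F ⟨min j d, lt_of_le_of_lt (min_le_right _ _) (Nat.lt_succ_self d)⟩ := by
  have h1 : ∑ j ∈ Finset.univ.erase (Fin.last d), F j + F (Fin.last d) = ∑ j, F j :=
    Finset.sum_erase_add _ _ (Finset.mem_univ _)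
  have h2 : ∑ j : Fin (d+1), F j
      = ∑ j ∈ range (d+1),
          F ⟨min j d, lt_of_le_of_lt (min_le_right _ _) (Nat.lt_succ_self d)⟩ := by
    rw [← Fin.sum_univ_eq_sum_range
      (fun j => F ⟨min j d, lt_of_le_of_lt (min_le_right _ _) (Nat.lt_succ_self d)⟩) (d+1)]
    apply Finset.sum_congr rfl
    intro i _
    congr 1
    exact Fin.ext (by simp [Fin.is_le i])
  rw [Finset.sum_range_succ] at h2
  have h3 : F ⟨min d d, lt_of_le_of_lt (min_le_right _ _) (Nat.lt_succ_self d)⟩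
      = F (Fin.last d) := by
    congr 1
    exact Fin.ext (by simp [Fin.last])
  omega

lemma main_count (d n : ℕ) (hn : 0 < n) :
    (((XnOrdFinset (d+1) n).biUnion gridIdx).card : ℝ) ≤
      (8 * Real.exp 80) * (2:ℝ)^n * Real.exp (Real.pi * Real.sqrt (5*((d+1:ℕ):ℝ)/3)) := by
  classical
  have hdpos : (0:ℝ) < ((d+1:ℕ):ℝ) := by positivity
  set S := XnOrdFinset (d+1) n with hS
  have hmem : ∀ l ∈ S, (∀ j, 1 ≤ l j) ∧ (∀ j, l j ≤ n + (d+1)) ∧ XnCond (d+1) n l ∧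
      (∀ j j' : Fin (d+1), j ≤ j' → l j ≤ l j') := by
    intro l hl
    rw [hS, XnOrdFinset, Finset.mem_filter, XnFinset, Finset.mem_filter,
      Fintype.mem_piFinset] at hl
    exact ⟨fun j => (Finset.mem_Icc.mp (hl.1.1 j)).1,
      fun j => (Finset.mem_Icc.mp (hl.1.1 j)).2, hl.1.2, hl.2⟩
  -- step A
  have stepA : ((S.biUnion gridIdx).card : ℝ) ≤ ∑ l ∈ S, (2:ℝ)^(∑ j, (l j - 1)) := by
    have h1 : (S.biUnion gridIdx).card ≤ ∑ l ∈ S, (gridIdx l).card :=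
      Finset.card_biUnion_le
    have h2 : ∑ l ∈ S, (gridIdx l).card ≤ ∑ l ∈ S, 2^(∑ j, (l j - 1)) :=
      Finset.sum_le_sum fun l hl => gridIdx_card_le l (hmem l hl).1
    calc ((S.biUnion gridIdx).card : ℝ)
        ≤ ((∑ l ∈ S, 2^(∑ j, (l j - 1)) : ℕ) : ℝ) := by exact_mod_cast h1.trans h2
      _ = ∑ l ∈ S, (2:ℝ)^(∑ j, (l j - 1)) := by push_cast; rfl
  -- notation
  set A : ℝ := (2:ℝ)^((4/5)*((n:ℝ)-1)) * ((d+1:ℕ):ℝ)^((4/15):ℝ) with hA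
  set G : (Fin (d+1) → ℕ) → ℝ := fun c => ∏ i : Fin (d+1), (rr (d - (i:ℕ)))^(c i) with hG
  set Φ : (Fin (d+1) → ℕ) → (Fin (d+1) → ℕ) := fun l i => Uf d l (i:ℕ) with hΦ
  set Mi : Fin (d+1) → ℕ :=
    fun i => if (i:ℕ) = d then n + Nat.log 2 (d+1) + 1 else n + d + 2 with hMi
  set T := Fintype.piFinset (fun i : Fin (d+1) => range (Mi i)) with hT
  have hGnonneg : ∀ c, 0 ≤ G c :=
    fun c => Finset.prod_nonneg fun i _ => pow_nonneg (rr_pos _).le _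
  -- K bound
  have hKb : ∀ l ∈ S, l (Fin.last d) - 1 ≤ n + Nat.log 2 (d+1) := by
    intro l hl
    obtain ⟨Hone, Hbox, Hcond, Hmono⟩ := hmem l hl
    have key := key_ineq d n l Hmono Hcond
    have hnn : (0:ℝ) ≤ ∑ j ∈ Finset.univ.erase (Fin.last d), ((l j:ℝ) - 1) := by
      apply Finset.sum_nonneg
      intro j _
      have : (1:ℝ) ≤ (l j : ℝ) := by exact_mod_cast Hone j
      linarith
    have hlogb := logb_le_natlog d
    have hcastlog : (0:ℝ) ≤ (Nat.log 2 (d+1) : ℝ) := by positivity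
    have hreal : ((l (Fin.last d) : ℝ)) - 1 ≤ ((n + Nat.log 2 (d+1) : ℕ) : ℝ) := by
      push_cast
      linarith
    have hcast : ((l (Fin.last d) - 1 : ℕ) : ℝ) = (l (Fin.last d) : ℝ) - 1 := by
      rw [Nat.cast_sub (Hone _)]; norm_num
    have : ((l (Fin.last d) - 1 : ℕ) : ℝ) ≤ ((n + Nat.log 2 (d+1) : ℕ) : ℝ) := by
      rw [hcast]; exact hreal
    exact_mod_cast this
  -- pointwise bound
  have pointwise : ∀ l ∈ S, (2:ℝ)^(∑ j, (l j - 1)) ≤ A * G (Φ l) := by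
    intro l hl
    obtain ⟨Hone, Hbox, Hcond, Hmono⟩ := hmem l hl
    set K : ℕ := l (Fin.last d) - 1 with hK
    set Jn : ℕ := ∑ j ∈ range d, (Bf d l (j+1) - 1) with hJn
    have hKnat : ∑ i ∈ range (d+1), Uf d l i = K := by
      have h1 := sum_Uf_last Hmono Hone
      have h2 := Hone (Fin.last d)
      omega
    have hJnat : ∑ i ∈ range (d+1), (d - i) * Uf d l i = Jn := weighted_sum Hmono Hone
    have hKR : ((K:ℕ):ℝ) = (l (Fin.last d):ℝ) - 1 := by
      rw [hK, Nat.cast_sub (Hone _)]; norm_num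
    have heraseJ : ∑ j ∈ Finset.univ.erase (Fin.last d), ((l j:ℝ) - 1) = (Jn : ℝ) := by
      rw [erase_sum_eq d (fun j => ((l j : ℝ) - 1)), hJn, Nat.cast_sum]
      apply Finset.sum_congr rfl
      intro j _
      have hBL : Bf d l (j+1)
          = l ⟨min j d, lt_of_le_of_lt (min_le_right _ _) (Nat.lt_succ_self d)⟩ := rfl
      rw [Nat.cast_sub (Bf_one Hone (j+1)), hBL]
      norm_num
    have hmR : ((∑ j, (l j - 1) : ℕ) : ℝ) = (K:ℝ) + (Jn:ℝ) := by
      have h1 : ∑ j ∈ Finset.univ.erase (Fin.last d), (l j - 1) + (l (Fin.last d) - 1)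
          = ∑ j, (l j - 1) := Finset.sum_erase_add _ _ (Finset.mem_univ _)
      have h2 : ∑ j ∈ Finset.univ.erase (Fin.last d), (l j - 1) = Jn := by
        rw [erase_sum_eq_nat d (fun j => l j - 1), hJn]
        exact Finset.sum_congr rfl fun j _ => rfl
      have h3 : (∑ j, (l j - 1)) = K + Jn := by omega
      rw [h3]; push_cast; ring
    have hkey : 3*(K:ℝ) + 5*(Jn:ℝ) ≤ 3*(n:ℝ) - 3 + Real.logb 2 ((d+1:ℕ):ℝ) := by
      have hki := key_ineq d n l Hmono Hcond
      rw [heraseJ] at hki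
      linarith [hKR, hki]
    have hGΦ : G (Φ l) = (2:ℝ)^((K:ℝ)/5 - (Jn:ℝ)/3) := by
      simp only [hG, hΦ]
      have e1 : ∀ i : Fin (d+1), (rr (d - (i:ℕ)))^(Uf d l (i:ℕ))
          = (2:ℝ)^((((1/5):ℝ) - ((d - (i:ℕ):ℕ):ℝ)/3) * ((Uf d l (i:ℕ):ℕ):ℝ)) := by
        intro i
        rw [Real.rpow_mul (by norm_num), Real.rpow_natCast]
        rfl
      rw [Finset.prod_congr rfl (fun i _ => e1 i)]
      have e2 : ∑ i : Fin (d+1), ((((1/5):ℝ) - ((d - (i:ℕ):ℕ):ℝ)/3) * ((Uf d l (i:ℕ):ℕ):ℝ))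
          = (K:ℝ)/5 - (Jn:ℝ)/3 := by
        rw [Fin.sum_univ_eq_sum_range
          (fun i => ((((1/5):ℝ) - ((d - i:ℕ):ℝ)/3) * ((Uf d l i:ℕ):ℝ))) (d+1)]
        have e3 : ∀ i ∈ range (d+1), ((((1/5):ℝ) - ((d - i:ℕ):ℝ)/3) * ((Uf d l i:ℕ):ℝ))
            = (1/5)*((Uf d l i:ℕ):ℝ) - (1/3)*((((d-i)*Uf d l i : ℕ)):ℝ) := by
          intro i _
          push_cast
          ring
        rw [Finset.sum_congr rfl e3, Finset.sum_sub_distrib, ← Finset.mul_sum, ← Finset.mul_sum]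
        rw [show ∑ i ∈ range (d+1), ((Uf d l i:ℕ):ℝ)
            = ((∑ i ∈ range (d+1), Uf d l i : ℕ):ℝ) by push_cast; rfl]
        rw [show ∑ i ∈ range (d+1), ((((d-i)*Uf d l i : ℕ)):ℝ)
            = ((∑ i ∈ range (d+1), (d-i)*Uf d l i : ℕ):ℝ) by push_cast; rfl]
        rw [hKnat, hJnat]
        ring
      rw [← e2]
      simp_rw [Real.rpow_def_of_pos (show (0:ℝ) < 2 by norm_num)]
      rw [← Real.exp_sum]
      congr 1
      rw [← Finset.mul_sum]
    have hA2 : A = (2:ℝ)^((4/5)*((n:ℝ)-1) + (4/15)*Real.logb 2 ((d+1:ℕ):ℝ)) := by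
      rw [hA, Real.rpow_add (by norm_num)]
      congr 1
      rw [mul_comm ((4:ℝ)/15) _, Real.rpow_mul (by norm_num),
        Real.rpow_logb (by norm_num) (by norm_num) hdpos]
    rw [hGΦ, hA2, ← Real.rpow_add (by norm_num)]
    rw [show ((2:ℝ)^(∑ j, (l j - 1) : ℕ)) = (2:ℝ)^(((∑ j, (l j - 1) : ℕ)):ℝ) from
      (Real.rpow_natCast 2 _).symm]
    apply Real.rpow_le_rpow_of_exponent_le (by norm_num)
    rw [hmR]
    have hlogn : 0 ≤ Real.logb 2 ((d+1:ℕ):ℝ) := by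
      apply Real.logb_nonneg (by norm_num)
      push_cast
      linarith
    linarith [hkey]
  -- injectivity
  have hinj : ∀ l ∈ S, ∀ l' ∈ S, Φ l = Φ l' → l = l' := by
    intro l hl l' hl' h
    obtain ⟨Hone, _, _, Hmono⟩ := hmem l hl
    obtain ⟨Hone', _, _, Hmono'⟩ := hmem l' hl'
    have hU : ∀ i, i < d+1 → Uf d l i = Uf d l' i := by
      intro i hi
      have := congrFun h (⟨i, hi⟩ : Fin (d+1))
      simpa [hΦ] using this
    funext j
    have hj : (j:ℕ) ≤ d := Fin.is_le j
    have hlt : (j:ℕ) + 1 ≤ d + 1 := by omega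
    have b1 : Bf d l ((j:ℕ)+1) = l j := by
      rw [Bf_succ_eq (l := l) (j:ℕ) hj]
    have b1' : Bf d l' ((j:ℕ)+1) = l' j := by
      rw [Bf_succ_eq (l := l') (j:ℕ) hj]
    have s1 := sum_Uf Hmono Hone ((j:ℕ)+1)
    have s1' := sum_Uf Hmono' Hone' ((j:ℕ)+1)
    have heqs : ∑ i ∈ range ((j:ℕ)+1), Uf d l i = ∑ i ∈ range ((j:ℕ)+1), Uf d l' i := by
      apply Finset.sum_congr rfl
      intro i hi
      exact hU i (by simp only [Finset.mem_range] at hi; omega)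
    omega
  -- image ⊆ T
  have hsub : S.image Φ ⊆ T := by
    intro c hc
    rw [Finset.mem_image] at hc
    obtain ⟨l, hl, rfl⟩ := hc
    obtain ⟨Hone, Hbox, Hcond, Hmono⟩ := hmem l hl
    rw [hT, Fintype.mem_piFinset]
    intro i
    rw [Finset.mem_range, hMi]
    show Uf d l (i:ℕ) < if (i:ℕ) = d then n + Nat.log 2 (d+1) + 1 else n + d + 2
    by_cases hid : (i:ℕ) = d
    · rw [if_pos hid, hid]
      have hle : Uf d l d ≤ ∑ t ∈ range (d+1), Uf d l t :=
        Finset.single_le_sum (fun t _ => Nat.zero_le _) (by simp)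
      have hsumU := sum_Uf_last Hmono Hone
      have hK := hKb l hl
      have h1 := Hone (Fin.last d)
      omega
    · rw [if_neg hid]
      have e := Bf_succ_eq (l := l) (i:ℕ) (Fin.is_le i)
      have h1 := Bf_one (l := l) Hone (i:ℕ)
      have h2 : l ⟨(i:ℕ), by omega⟩ ≤ n + (d+1) := Hbox _
      have h3 : Uf d l (i:ℕ) = Bf d l ((i:ℕ)+1) - Bf d l (i:ℕ) := rfl
      omega
  -- product bound
  have hprod : ∏ i : Fin (d+1), ∑ u ∈ range (Mi i), (rr (d - (i:ℕ)))^u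
      ≤ Real.exp 80 * (8 * (2:ℝ)^(((n:ℝ)+1)/5) * ((d+1:ℕ):ℝ)^((1/5):ℝ)) := by
    set q : ℝ := (2:ℝ)^(-(1/3):ℝ) with hq
    have hq0 : 0 < q := Real.rpow_pos_of_pos (by norm_num) _
    have hq1 : q ≤ 4/5 := N1
    -- last factor
    have hMlast : Mi (Fin.last d) = n + Nat.log 2 (d+1) + 1 := by
      rw [hMi]; simp [Fin.last]
    have hlast0 : d - ((Fin.last d : Fin (d+1)):ℕ) = 0 := by simp [Fin.last]
    have h2 : ∑ u ∈ range (Mi (Fin.last d)), (rr (d - ((Fin.last d : Fin (d+1)):ℕ)))^u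
        ≤ 8 * (2:ℝ)^(((n:ℝ)+1)/5) * ((d+1:ℕ):ℝ)^((1/5):ℝ) := by
      rw [hMlast, hlast0, rr_zero]
      set ρ : ℝ := (2:ℝ)^((1/5):ℝ) with hρ
      set M : ℕ := n + Nat.log 2 (d+1) + 1 with hM
      have hρ1 : (9/8:ℝ) ≤ ρ := N3
      have hρne : ρ ≠ 1 := by intro hh; rw [hh] at hρ1; norm_num at hρ1
      have hgeom : ∑ u ∈ range M, ρ^u = (ρ^M - 1)/(ρ - 1) := geom_sum_eq hρne M
      have hρM1 : (1:ℝ) ≤ ρ^M := one_le_pow₀ (by linarith)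
      have hdiv : (ρ^M - 1)/(ρ - 1) ≤ 8 * ρ^M := by
        rw [div_le_iff₀ (by linarith)]
        nlinarith
      have hρMle : ρ^M ≤ (2:ℝ)^(((n:ℝ)+1)/5) * ((d+1:ℕ):ℝ)^((1/5):ℝ) := by
        have e1 : ρ^M = (2:ℝ)^((1/5)*((M:ℕ):ℝ)) := by
          rw [Real.rpow_mul (by norm_num), Real.rpow_natCast]
        have e2 : (1/5)*((M:ℕ):ℝ) = ((n:ℝ)+1)/5 + (1/5)*((Nat.log 2 (d+1) : ℕ):ℝ) := by
          rw [hM]; push_cast; ring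
        rw [e1, e2, Real.rpow_add (by norm_num)]
        apply mul_le_mul_of_nonneg_left _ (by positivity)
        have e3 : (2:ℝ)^((1/5)*((Nat.log 2 (d+1) : ℕ):ℝ))
            = (((2^(Nat.log 2 (d+1)) : ℕ):ℝ))^((1/5):ℝ) := by
          rw [mul_comm, Real.rpow_mul (by norm_num), Real.rpow_natCast]
          push_cast
          ring
        rw [e3]
        apply Real.rpow_le_rpow (by positivity) _ (by norm_num)
        exact_mod_cast Nat.pow_log_le_self 2 (Nat.succ_ne_zero d)
      calc ∑ u ∈ range M, ρ^u = (ρ^M - 1)/(ρ - 1) := hgeom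
        _ ≤ 8 * ρ^M := hdiv
        _ ≤ 8 * ((2:ℝ)^(((n:ℝ)+1)/5) * ((d+1:ℕ):ℝ)^((1/5):ℝ)) := by
            apply mul_le_mul_of_nonneg_left hρMle (by norm_num)
        _ = 8 * (2:ℝ)^(((n:ℝ)+1)/5) * ((d+1:ℕ):ℝ)^((1/5):ℝ) := by ring
    -- erase factors
    have hsumrr : ∑ i ∈ Finset.univ.erase (Fin.last d), rr (d - (i:ℕ)) ≤ 5 := by
      rw [erase_sum_eq d (fun i => rr (d - ((i : Fin (d+1)):ℕ)))]
      have e1 : ∀ j ∈ range d, rr (d - min j d) = (2:ℝ)^((1/5):ℝ) * q^(d-j) := by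
        intro j hj
        rw [Finset.mem_range] at hj
        rw [show min j d = j by omega]
        exact rr_eq (d - j)
      rw [Finset.sum_congr rfl e1, ← Finset.mul_sum]
      have e2 : ∑ j ∈ range d, q^(d-j) = ∑ j ∈ range d, q^(j+1) := by
        rw [← Finset.sum_range_reflect (fun j => q^(j+1)) d]
        apply Finset.sum_congr rfl
        intro j hj
        rw [Finset.mem_range] at hj
        congr 1
        omega
      have e3 : ∑ j ∈ range d, q^(j+1) = q * ∑ j ∈ range d, q^j := by
        rw [Finset.mul_sum]
        apply Finset.sum_congr rfl
        intro j _
        rw [pow_succ]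
        ring
      have e4 : ∑ j ∈ range d, q^j ≤ (1-q)⁻¹ := geom_le hq0.le (by linarith) d
      have e5 : (1-q)⁻¹ ≤ 5 := by
        rw [show (5:ℝ) = ((1/5:ℝ))⁻¹ by norm_num]
        apply inv_anti₀ (by norm_num) (by linarith)
      have e6 : (2:ℝ)^((1/5):ℝ) ≤ 6/5 := N2
      have e7 : (0:ℝ) ≤ ∑ j ∈ range d, q^j :=
        Finset.sum_nonneg fun j _ => pow_nonneg hq0.le _
      rw [e2, e3]
      have e8 : q * ∑ j ∈ range d, q^j ≤ 4 := by nlinarith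
      have e9 : (0:ℝ) < (2:ℝ)^((1/5):ℝ) := Real.rpow_pos_of_pos (by norm_num) _
      nlinarith
    have h1 : ∏ i ∈ Finset.univ.erase (Fin.last d),
        ∑ u ∈ range (Mi i), (rr (d - (i:ℕ)))^u ≤ Real.exp 80 := by
      have hb : ∀ i ∈ Finset.univ.erase (Fin.last d),
          ∑ u ∈ range (Mi i), (rr (d - (i:ℕ)))^u ≤ Real.exp (16 * rr (d - (i:ℕ))) := by
        intro i hi
        have hine : i ≠ Fin.last d := (Finset.mem_erase.mp hi).1
        have hi' : (i:ℕ) < d := by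
          have h1 := Fin.is_le i
          rcases Nat.lt_or_ge ((i:ℕ)) d with h | h
          · exact h
          · exfalso; apply hine; apply Fin.ext; simp [Fin.last]; omega
        have ht : 1 ≤ d - (i:ℕ) := by omega
        calc ∑ u ∈ range (Mi i), (rr (d - (i:ℕ)))^u
            ≤ (1 - rr (d - (i:ℕ)))⁻¹ :=
              geom_le (rr_pos _).le (lt_of_le_of_lt (rr_le _ ht) (by norm_num)) _
          _ ≤ Real.exp (16 * rr (d - (i:ℕ))) := inv_le_exp (rr_pos _) (rr_le _ ht)
      calc ∏ i ∈ Finset.univ.erase (Fin.last d), ∑ u ∈ range (Mi i), (rr (d - (i:ℕ)))^u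
          ≤ ∏ i ∈ Finset.univ.erase (Fin.last d), Real.exp (16 * rr (d - (i:ℕ))) := by
            apply Finset.prod_le_prod _ hb
            intro i _
            exact Finset.sum_nonneg fun u _ => pow_nonneg (rr_pos _).le _
        _ = Real.exp (∑ i ∈ Finset.univ.erase (Fin.last d), 16 * rr (d - (i:ℕ))) :=
            (Real.exp_sum _ _).symm
        _ ≤ Real.exp 80 := by
            apply Real.exp_le_exp.mpr
            rw [← Finset.mul_sum]
            linarith
    calc ∏ i : Fin (d+1), ∑ u ∈ range (Mi i), (rr (d - (i:ℕ)))^u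
        = (∏ i ∈ Finset.univ.erase (Fin.last d), ∑ u ∈ range (Mi i), (rr (d - (i:ℕ)))^u)
            * ∑ u ∈ range (Mi (Fin.last d)), (rr (d - ((Fin.last d : Fin (d+1)):ℕ)))^u :=
          (Finset.prod_erase_mul Finset.univ _ (Finset.mem_univ (Fin.last d))).symm
      _ ≤ Real.exp 80 * (8 * (2:ℝ)^(((n:ℝ)+1)/5) * ((d+1:ℕ):ℝ)^((1/5):ℝ)) := by
          apply mul_le_mul h1 h2 _ (Real.exp_nonneg _)
          exact Finset.sum_nonneg fun u _ => pow_nonneg (rr_pos _).le _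
  -- assembly
  have hsum : ∑ l ∈ S, (2:ℝ)^(∑ j, (l j - 1))
      ≤ A * (Real.exp 80 * (8 * (2:ℝ)^(((n:ℝ)+1)/5) * ((d+1:ℕ):ℝ)^((1/5):ℝ))) := by
    calc ∑ l ∈ S, (2:ℝ)^(∑ j, (l j - 1))
        ≤ ∑ l ∈ S, A * G (Φ l) := Finset.sum_le_sum pointwise
      _ = A * ∑ l ∈ S, G (Φ l) := by rw [Finset.mul_sum]
      _ = A * ∑ c ∈ S.image Φ, G c := by rw [Finset.sum_image hinj]
      _ ≤ A * ∑ c ∈ T, G c := by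
          apply mul_le_mul_of_nonneg_left _ (by positivity)
          exact Finset.sum_le_sum_of_subset_of_nonneg hsub fun c _ _ => hGnonneg c
      _ = A * ∏ i : Fin (d+1), ∑ u ∈ range (Mi i), (rr (d - (i:ℕ)))^u := by
          simp only [hG, hT]
          rw [Finset.prod_univ_sum]
      _ ≤ _ := mul_le_mul_of_nonneg_left hprod (by positivity)
  -- final numeric assembly
  have final : A * (Real.exp 80 * (8 * (2:ℝ)^(((n:ℝ)+1)/5) * ((d+1:ℕ):ℝ)^((1/5):ℝ)))
      ≤ (8 * Real.exp 80) * (2:ℝ)^n * Real.exp (Real.pi * Real.sqrt (5*((d+1:ℕ):ℝ)/3)) := by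
    have e1 : (2:ℝ)^((4/5)*((n:ℝ)-1)) * (2:ℝ)^(((n:ℝ)+1)/5) ≤ (2:ℝ)^n := by
      rw [← Real.rpow_add (by norm_num), ← Real.rpow_natCast 2 n]
      apply Real.rpow_le_rpow_of_exponent_le (by norm_num)
      linarith
    have e2 : ((d+1:ℕ):ℝ)^((4/15):ℝ) * ((d+1:ℕ):ℝ)^((1/5):ℝ)
        ≤ Real.exp (Real.pi * Real.sqrt (5*((d+1:ℕ):ℝ)/3)) := by
      rw [← Real.rpow_add hdpos]
      calc ((d+1:ℕ):ℝ)^((4/15:ℝ)+(1/5:ℝ)) ≤ ((d+1:ℕ):ℝ)^(1:ℝ) := by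
            apply Real.rpow_le_rpow_of_exponent_le (by exact_mod_cast Nat.le_add_left 1 d)
            norm_num
        _ = ((d+1:ℕ):ℝ) := Real.rpow_one _
        _ ≤ _ := dim_le_exp d
    calc A * (Real.exp 80 * (8 * (2:ℝ)^(((n:ℝ)+1)/5) * ((d+1:ℕ):ℝ)^((1/5):ℝ)))
        = (8 * Real.exp 80) * (((2:ℝ)^((4/5)*((n:ℝ)-1)) * (2:ℝ)^(((n:ℝ)+1)/5))
            * (((d+1:ℕ):ℝ)^((4/15):ℝ) * ((d+1:ℕ):ℝ)^((1/5):ℝ))) := by rw [hA]; ring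
      _ ≤ (8 * Real.exp 80) * ((2:ℝ)^n
            * Real.exp (Real.pi * Real.sqrt (5*((d+1:ℕ):ℝ)/3))) := by
          apply mul_le_mul_of_nonneg_left _ (by positivity)
          apply mul_le_mul e1 e2 (by positivity) (by positivity)
      _ = _ := by ring
  exact stepA.trans (hsum.trans final)

end XnMain2

end XnAuxSection

/-- Proposition `XNsym`: the energy-based index set `X_n` is
permutation-symmetric, and the total number of grid points in the symmetric sparse grid is
at most `C_s 2^n e^{π√(5d/3)}` with `C_s` independent of `n` and `d`. -/
theorem Xn_symmetric_and_count :
    (∀ (d n : ℕ), 0 < d → 0 < n → ∀ (l : Fin d → ℕ) (τ : Equiv.Perm (Fin d)),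
        XnCond d n l → XnCond d n fun j => l (τ j)) ∧
    ∃ Cs : ℝ, 0 < Cs ∧
      ∀ (d n : ℕ), 0 < d → 0 < n →
        (((XnOrdFinset d n).biUnion gridIdx).card : ℝ) ≤
          Cs * (2 : ℝ) ^ n * Real.exp (π * Real.sqrt (5 * d / 3)) := by
  constructor
  · intro d n hd hn l τ hcond
    obtain ⟨h1, h2⟩ := hcond
    refine ⟨fun j => h1 (τ j), ?_⟩
    have e1 : ∑ j, ((l (τ j)):ℝ) = ∑ j, (l j : ℝ) := Equiv.sum_comp τ (fun j => ((l j):ℝ))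
    have e2 : ∑ j, (4:ℝ)^(l (τ j)) = ∑ j, (4:ℝ)^(l j) :=
      Equiv.sum_comp τ (fun j => (4:ℝ)^(l j))
    rw [e1, e2]
    exact h2
  · refine ⟨8 * Real.exp 80, by positivity, ?_⟩
    intro d n hd hn
    obtain ⟨d', rfl⟩ : ∃ d', d = d'+1 := ⟨d-1, by omega⟩
    have h := XnMain2.main_count d' n hn
    exact h
end

section
/- Let h(x) = 1 − |x| for x ∈ [−1,1] and h(x) = 0 otherwise (the standard hat function), and let σ(x) = (max{0,x})^2, S_δ(x) := (σ(x) − σ(x−δ))/(2δ), and h_δ(x) := S_δ(x+1−δ) − 2S_δ(x) + S_δ(x−1+δ). Then for any M ≥ 1, ‖h_δ − h‖_{H^1([−M,M])} → 0 as δ → 0, and for each sufficiently small δ > 0 the support of h_δ is contained in [−1,1], i.e. supp(h_δ) ⊆ supp(h). -/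
open MeasureTheory Real Finset
open scoped Classical

open scoped NNReal

lemma sqReLU_of_nonpos {t : ℝ} (h : t ≤ 0) : sqReLU t = 0 := by
  unfold sqReLU; rw [max_eq_left h]; ring

lemma sqReLU_of_nonneg {t : ℝ} (h : 0 ≤ t) : sqReLU t = t ^ 2 := by
  unfold sqReLU; rw [max_eq_right h]

lemma sqReLU_eq (t : ℝ) : sqReLU t = if 0 ≤ t then t ^ 2 else 0 := by
  split_ifs with h
  · exact sqReLU_of_nonneg h
  · exact sqReLU_of_nonpos (le_of_not_ge h)

lemma hat_eq (x : ℝ) : hatFn x = max 0 (x + 1) - 2 * max 0 x + max 0 (x - 1) := by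
  unfold hatFn
  rcases le_total x 0 with h | h
  · rw [abs_of_nonpos h]; simp only [max_def]; split_ifs <;> linarith
  · rw [abs_of_nonneg h]; simp only [max_def]; split_ifs <;> linarith

set_option maxHeartbeats 1000000 in
lemma sdelta_mono_bounds {δ y z : ℝ} (hδ : 0 < δ) (hzy : z ≤ y) :
    0 ≤ Sdelta δ y - Sdelta δ z ∧ Sdelta δ y - Sdelta δ z ≤ y - z := by
  have h2 : (0:ℝ) < 2 * δ := by linarith
  unfold Sdelta
  rw [div_sub_div_same]
  constructor
  · apply div_nonneg _ h2.le
    simp only [sqReLU_eq]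
    split_ifs <;> nlinarith [sq_nonneg (y - z), sq_nonneg (y - δ), sq_nonneg (z - δ)]
  · rw [div_le_iff₀ h2]
    simp only [sqReLU_eq]
    split_ifs <;>
      nlinarith [sq_nonneg (y - z), sq_nonneg (δ - z), sq_nonneg (δ - y), sq_nonneg (y - z - δ)]

lemma sdelta_lip {δ : ℝ} (hδ : 0 < δ) (y z : ℝ) : |Sdelta δ y - Sdelta δ z| ≤ |y - z| := by
  rcases le_total z y with h | h
  · obtain ⟨h1, h2⟩ := sdelta_mono_bounds hδ h
    rw [abs_of_nonneg h1, abs_of_nonneg (by linarith : (0:ℝ) ≤ y - z)]; exact h2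
  · obtain ⟨h1, h2⟩ := sdelta_mono_bounds hδ h
    rw [abs_sub_comm, abs_sub_comm y z, abs_of_nonneg h1,
      abs_of_nonneg (by linarith : (0:ℝ) ≤ z - y)]
    exact h2

set_option maxHeartbeats 1000000 in
lemma sdelta_approx {δ : ℝ} (hδ : 0 < δ) (y : ℝ) : |Sdelta δ y - max 0 y| ≤ δ := by
  have h2 : (0:ℝ) < 2 * δ := by linarith
  have key : Sdelta δ y - max 0 y = (sqReLU y - sqReLU (y - δ) - 2 * δ * max 0 y) / (2 * δ) := by
    unfold Sdelta; field_simp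
  rw [key, abs_div, abs_of_pos h2, div_le_iff₀ h2]
  rw [abs_le]
  constructor <;>
  · simp only [sqReLU_eq, max_def]
    split_ifs <;> nlinarith [sq_nonneg (y - δ), sq_nonneg y, sq_nonneg (y - 2 * δ)]

lemma sdelta_zero {δ y : ℝ} (hδ : 0 < δ) (hy : y ≤ 0) : Sdelta δ y = 0 := by
  unfold Sdelta
  rw [sqReLU_of_nonpos hy, sqReLU_of_nonpos (by linarith)]
  simp

lemma sdelta_lin {δ y : ℝ} (hδ : 0 < δ) (hy : δ ≤ y) : Sdelta δ y = y - δ / 2 := by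
  unfold Sdelta
  rw [sqReLU_of_nonneg (by linarith), sqReLU_of_nonneg (by linarith)]
  field_simp; ring

lemma relu_lip (a b : ℝ) : |max 0 a - max 0 b| ≤ |a - b| := by
  rw [max_comm 0 a, max_comm 0 b]; exact abs_max_sub_max_le_abs a b 0

lemma abs_deriv_le_of_lip {f : ℝ → ℝ} {K : ℝ≥0} (hf : LipschitzWith K f) (x : ℝ) :
    |deriv f x| ≤ (K : ℝ) := by
  have h1 : deriv f x = fderiv ℝ f x 1 := rfl
  calc |deriv f x| = ‖fderiv ℝ f x 1‖ := by rw [h1]; rfl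
    _ ≤ ‖fderiv ℝ f x‖ * ‖(1:ℝ)‖ := (fderiv ℝ f x).le_opNorm 1
    _ ≤ (K : ℝ) * 1 := by
        gcongr
        · exact norm_fderiv_le_of_lipschitz ℝ hf
        · simp
    _ = (K : ℝ) := mul_one _

lemma deriv_zero_of_const_on {f : ℝ → ℝ} {s : Set ℝ} (hs : IsOpen s) (c : ℝ) {x : ℝ}
    (hx : x ∈ s) (h : ∀ y ∈ s, f y = c) : deriv f x = 0 := by
  have he : f =ᶠ[nhds x] (fun _ => c) := Filter.eventually_of_mem (hs.mem_nhds hx) h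
  rw [he.deriv_eq]; exact deriv_const x c


/-- `h_δ = S_δ(·+1-δ) - 2S_δ + S_δ(·-1+δ)` converges to the hat function
in `H^1([-M,M])` as `δ → 0⁺`, and for sufficiently small `δ` its support is contained in
the support `[-1,1]` of the hat function. -/
theorem hdelta_tendsto_hat_H1_and_support (M : ℝ) (hM : 1 ≤ M) :
    Filter.Tendsto
      (fun δ => H1normOn (Set.Icc (-M) M) fun x =>
        (Sdelta δ (x + 1 - δ) - 2 * Sdelta δ x + Sdelta δ (x - 1 + δ)) - hatFn x)
      (nhdsWithin 0 (Set.Ioi 0)) (nhds 0) ∧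
    ∃ δ₀ : ℝ, 0 < δ₀ ∧ ∀ δ : ℝ, 0 < δ → δ < δ₀ →
      tsupport (fun x => Sdelta δ (x + 1 - δ) - 2 * Sdelta δ x + Sdelta δ (x - 1 + δ)) ⊆
        tsupport hatFn := by
  constructor
  · -- H^1 convergence
    have main : ∀ δ : ℝ, δ ∈ Set.Ioo (0:ℝ) (1/2) →
        H1normOn (Set.Icc (-M) M) (fun x =>
          (Sdelta δ (x + 1 - δ) - 2 * Sdelta δ x + Sdelta δ (x - 1 + δ)) - hatFn x) ≤
        (72 * M * δ ^ 2 + 256 * δ) ^ (1/2 : ℝ) := by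
      intro δ hmem
      obtain ⟨hδ0, hδhalf⟩ := hmem
      set u : ℝ → ℝ := fun x =>
        (Sdelta δ (x + 1 - δ) - 2 * Sdelta δ x + Sdelta δ (x - 1 + δ)) - hatFn x with hu
      have csq : Continuous sqReLU := by
        unfold sqReLU; exact (continuous_const.max continuous_id).pow 2
      have cS : Continuous (Sdelta δ) := by
        unfold Sdelta
        exact (csq.sub (csq.comp (continuous_id.sub continuous_const))).div_const _
      have chat : Continuous hatFn := by
        have h : hatFn = fun x => max 0 (x + 1) - 2 * max 0 x + max 0 (x - 1) := funext hat_eq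
        rw [h]
        exact ((continuous_const.max (continuous_id.add continuous_const)).sub
          (continuous_const.mul (continuous_const.max continuous_id))).add
          (continuous_const.max (continuous_id.sub continuous_const))
      have cu : Continuous u := by
        rw [hu]
        exact (((cS.comp (by continuity)).sub (continuous_const.mul cS)).add
          (cS.comp (by continuity))).sub chat
      have hbound : ∀ x, |u x| ≤ 6 * δ := by
        intro x
        have a1 := sdelta_approx hδ0 (x + 1 - δ)
        have a2 := sdelta_approx hδ0 x
        have a3 := sdelta_approx hδ0 (x - 1 + δ)
        have r1 := relu_lip (x + 1 - δ) (x + 1)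
        have r3 := relu_lip (x - 1 + δ) (x - 1)
        rw [show x + 1 - δ - (x + 1) = -δ by ring, abs_neg, abs_of_pos hδ0] at r1
        rw [show x - 1 + δ - (x - 1) = δ by ring, abs_of_pos hδ0] at r3
        simp only [hu]
        rw [hat_eq x, abs_le]
        obtain ⟨a1l, a1r⟩ := abs_le.mp a1
        obtain ⟨a2l, a2r⟩ := abs_le.mp a2
        obtain ⟨a3l, a3r⟩ := abs_le.mp a3
        obtain ⟨r1l, r1r⟩ := abs_le.mp r1
        obtain ⟨r3l, r3r⟩ := abs_le.mp r3
        constructor <;> linarith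
      have hlip : LipschitzWith 8 u := by
        apply LipschitzWith.of_dist_le_mul
        intro y z
        rw [Real.dist_eq, Real.dist_eq]
        have s1 := sdelta_lip hδ0 (y + 1 - δ) (z + 1 - δ)
        have s2 := sdelta_lip hδ0 y z
        have s3 := sdelta_lip hδ0 (y - 1 + δ) (z - 1 + δ)
        rw [show y + 1 - δ - (z + 1 - δ) = y - z by ring] at s1
        rw [show y - 1 + δ - (z - 1 + δ) = y - z by ring] at s3
        have r1 := relu_lip (y + 1) (z + 1)
        have r2 := relu_lip y z
        have r3 := relu_lip (y - 1) (z - 1)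
        rw [show y + 1 - (z + 1) = y - z by ring] at r1
        rw [show y - 1 - (z - 1) = y - z by ring] at r3
        have hcoe : ((8 : ℝ≥0) : ℝ) = 8 := by norm_num
        rw [hcoe]
        simp only [hu]
        rw [hat_eq y, hat_eq z]
        obtain ⟨s1l, s1r⟩ := abs_le.mp s1
        obtain ⟨s2l, s2r⟩ := abs_le.mp s2
        obtain ⟨s3l, s3r⟩ := abs_le.mp s3
        obtain ⟨r1l, r1r⟩ := abs_le.mp r1
        obtain ⟨r2l, r2r⟩ := abs_le.mp r2
        obtain ⟨r3l, r3r⟩ := abs_le.mp r3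
        rw [abs_le]
        have habs := abs_nonneg (y - z)
        obtain ⟨hyz1, hyz2⟩ := abs_le.mp (le_refl |y - z|)
        constructor <;> linarith [neg_abs_le (y - z), le_abs_self (y - z)]
      have hderiv_le : ∀ x, |deriv u x| ≤ 8 := by
        intro x
        have h := abs_deriv_le_of_lip hlip x
        simpa using h
      set E : Set ℝ := Set.Icc (-1) (2 * δ - 1) ∪ Set.Icc 0 δ ∪ Set.Icc (1 - δ) 1 with hE
      have hEmeas : MeasurableSet E :=
        (measurableSet_Icc.union measurableSet_Icc).union measurableSet_Icc
      have hderiv0 : ∀ x, x ∉ E → deriv u x = 0 := by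
        intro x hx
        simp only [hE, Set.mem_union, not_or, Set.mem_Icc, not_and_or, not_le] at hx
        obtain ⟨⟨hA, hB⟩, hC⟩ := hx
        rcases lt_or_ge x (-1) with h1 | h1
        · refine deriv_zero_of_const_on isOpen_Iio 0 (Set.mem_Iio.mpr h1) ?_
          intro y hy
          simp only [Set.mem_Iio] at hy
          simp only [hu]
          rw [sdelta_zero hδ0 (by linarith), sdelta_zero hδ0 (by linarith),
            sdelta_zero hδ0 (by linarith), hat_eq, max_eq_left (by linarith : y + 1 ≤ 0),
            max_eq_left (by linarith : y ≤ 0), max_eq_left (by linarith : y - 1 ≤ 0)]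
          ring
        · have hA' : 2 * δ - 1 < x := by
            rcases hA with h | h
            · linarith
            · exact h
          rcases lt_or_ge x 0 with h2 | h2
          · refine deriv_zero_of_const_on isOpen_Ioo (-(3 * δ) / 2)
              (Set.mem_Ioo.mpr ⟨hA', h2⟩) ?_
            intro y hy
            obtain ⟨hy1, hy2⟩ := Set.mem_Ioo.mp hy
            simp only [hu]
            rw [sdelta_lin hδ0 (by linarith), sdelta_zero hδ0 (by linarith),
              sdelta_zero hδ0 (by linarith), hat_eq, max_eq_right (by linarith : 0 ≤ y + 1),
              max_eq_left (by linarith : y ≤ 0), max_eq_left (by linarith : y - 1 ≤ 0)]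
            ring
          · have hB' : δ < x := by
              rcases hB with h | h
              · linarith
              · exact h
            rcases lt_or_ge x (1 - δ) with h3 | h3
            · refine deriv_zero_of_const_on isOpen_Ioo (-δ / 2)
                (Set.mem_Ioo.mpr ⟨hB', h3⟩) ?_
              intro y hy
              obtain ⟨hy1, hy2⟩ := Set.mem_Ioo.mp hy
              simp only [hu]
              rw [sdelta_lin hδ0 (by linarith), sdelta_lin hδ0 (by linarith),
                sdelta_zero hδ0 (by linarith), hat_eq, max_eq_right (by linarith : 0 ≤ y + 1),
                max_eq_right (by linarith : 0 ≤ y), max_eq_left (by linarith : y - 1 ≤ 0)]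
              ring
            · have hC' : 1 < x := by
                rcases hC with h | h
                · linarith
                · exact h
              refine deriv_zero_of_const_on isOpen_Ioi 0 (Set.mem_Ioi.mpr hC') ?_
              intro y hy
              simp only [Set.mem_Ioi] at hy
              simp only [hu]
              rw [sdelta_lin hδ0 (by linarith), sdelta_lin hδ0 (by linarith),
                sdelta_lin hδ0 (by linarith), hat_eq, max_eq_right (by linarith : 0 ≤ y + 1),
                max_eq_right (by linarith : 0 ≤ y), max_eq_right (by linarith : 0 ≤ y - 1)]
              ring
      have hIcc_fin : volume (Set.Icc (-M) M) < ⊤ := measure_Icc_lt_top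
      have hint1 : IntegrableOn (fun x => u x ^ 2) (Set.Icc (-M) M) := (cu.pow 2).integrableOn_Icc
      have hI1 : (∫ x in Set.Icc (-M) M, u x ^ 2) ≤ 72 * M * δ ^ 2 := by
        have hpt : ∀ x, u x ^ 2 ≤ 36 * δ ^ 2 := by
          intro x
          nlinarith [hbound x, abs_nonneg (u x), sq_abs (u x)]
        calc (∫ x in Set.Icc (-M) M, u x ^ 2) ≤ ∫ _x in Set.Icc (-M) M, 36 * δ ^ 2 :=
              integral_mono hint1 (integrableOn_const hIcc_fin.ne) hpt
          _ = (M - -M) * (36 * δ ^ 2) := by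
              rw [setIntegral_const, Real.volume_real_Icc_of_le (by linarith), smul_eq_mul]
          _ ≤ 72 * M * δ ^ 2 := le_of_eq (by ring)
      have hmeas2 : AEStronglyMeasurable (fun x => deriv u x ^ 2)
          (volume.restrict (Set.Icc (-M) M)) :=
        ((measurable_deriv u).pow_const 2).aestronglyMeasurable
      have hint2 : IntegrableOn (fun x => deriv u x ^ 2) (Set.Icc (-M) M) := by
        refine Integrable.mono' (g := fun _ => (64:ℝ))
          (integrableOn_const hIcc_fin.ne) hmeas2 ?_
        refine Filter.Eventually.of_forall fun x => ?_
        show ‖deriv u x ^ 2‖ ≤ 64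
        rw [Real.norm_eq_abs, abs_of_nonneg (sq_nonneg _)]
        nlinarith [hderiv_le x, abs_nonneg (deriv u x), sq_abs (deriv u x)]
      have hg_int : IntegrableOn (E.indicator fun _ => (64:ℝ)) (Set.Icc (-M) M) :=
        (integrableOn_const hIcc_fin.ne).indicator hEmeas
      have hI2 : (∫ x in Set.Icc (-M) M, deriv u x ^ 2) ≤ 256 * δ := by
        have hpt : ∀ x, deriv u x ^ 2 ≤ E.indicator (fun _ => (64:ℝ)) x := by
          intro x
          by_cases hx : x ∈ E
          · rw [Set.indicator_of_mem hx]
            nlinarith [hderiv_le x, abs_nonneg (deriv u x), sq_abs (deriv u x)]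
          · rw [Set.indicator_of_notMem hx, hderiv0 x hx]; norm_num
        have hvol : (volume.restrict (Set.Icc (-M) M)) E ≤ ENNReal.ofReal (4 * δ) := by
          rw [Measure.restrict_apply hEmeas]
          refine le_trans (measure_mono Set.inter_subset_left) ?_
          calc volume E ≤ volume (Set.Icc (-1:ℝ) (2 * δ - 1)) + volume (Set.Icc (0:ℝ) δ) +
                volume (Set.Icc (1 - δ) (1:ℝ)) := by
                refine le_trans (measure_union_le _ _) ?_
                exact add_le_add (measure_union_le _ _) le_rfl
            _ = ENNReal.ofReal (2 * δ - 1 - (-1)) + ENNReal.ofReal (δ - 0) +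
                ENNReal.ofReal (1 - (1 - δ)) := by
                rw [Real.volume_Icc, Real.volume_Icc, Real.volume_Icc]
            _ ≤ ENNReal.ofReal (4 * δ) := by
                rw [← ENNReal.ofReal_add (by linarith) (by linarith),
                  ← ENNReal.ofReal_add (by linarith) (by linarith)]
                exact ENNReal.ofReal_le_ofReal (by linarith)
        calc (∫ x in Set.Icc (-M) M, deriv u x ^ 2)
            ≤ ∫ x in Set.Icc (-M) M, E.indicator (fun _ => (64:ℝ)) x :=
              integral_mono hint2 hg_int hpt
          _ = ∫ _x in E, (64:ℝ) ∂(volume.restrict (Set.Icc (-M) M)) := integral_indicator hEmeas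
          _ = ((volume.restrict (Set.Icc (-M) M)) E).toReal • (64:ℝ) := setIntegral_const _
          _ ≤ 256 * δ := by
              rw [smul_eq_mul]
              have h1 : ((volume.restrict (Set.Icc (-M) M)) E).toReal ≤ 4 * δ :=
                ENNReal.toReal_le_of_le_ofReal (by linarith) hvol
              have h0 : 0 ≤ ((volume.restrict (Set.Icc (-M) M)) E).toReal := ENNReal.toReal_nonneg
              linarith
      have hnn : 0 ≤ (∫ x in Set.Icc (-M) M, u x ^ 2) +
          ∫ x in Set.Icc (-M) M, deriv u x ^ 2 :=
        add_nonneg (integral_nonneg fun x => sq_nonneg _) (integral_nonneg fun x => sq_nonneg _)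
      show ((∫ x in Set.Icc (-M) M, u x ^ 2) + ∫ x in Set.Icc (-M) M, deriv u x ^ 2) ^ (1/2 : ℝ)
        ≤ (72 * M * δ ^ 2 + 256 * δ) ^ (1/2 : ℝ)
      exact Real.rpow_le_rpow hnn (by linarith) (by norm_num)
    have hnn' : ∀ δ : ℝ, 0 ≤ H1normOn (Set.Icc (-M) M) (fun x =>
        (Sdelta δ (x + 1 - δ) - 2 * Sdelta δ x + Sdelta δ (x - 1 + δ)) - hatFn x) := by
      intro δ
      apply Real.rpow_nonneg
      exact add_nonneg (integral_nonneg fun x => sq_nonneg _) (integral_nonneg fun x => sq_nonneg _)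
    have hg0 : Filter.Tendsto (fun δ : ℝ => (72 * M * δ ^ 2 + 256 * δ) ^ (1/2 : ℝ))
        (nhdsWithin 0 (Set.Ioi 0)) (nhds 0) := by
      have h0 : Filter.Tendsto (fun δ : ℝ => 72 * M * δ ^ 2 + 256 * δ)
          (nhdsWithin 0 (Set.Ioi 0)) (nhds 0) := by
        have hc : Continuous fun δ : ℝ => 72 * M * δ ^ 2 + 256 * δ := by continuity
        have h2 := (hc.tendsto 0).mono_left (nhdsWithin_le_nhds (s := Set.Ioi (0:ℝ)))
        simpa using h2
      have hcont := (Real.continuousAt_rpow_const 0 (1/2) (Or.inr (by norm_num))).tendsto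
      have := hcont.comp h0
      simpa [Function.comp_def, Real.zero_rpow (by norm_num : (1/2 : ℝ) ≠ 0)] using this
    refine squeeze_zero' (Filter.Eventually.of_forall hnn') ?_ hg0
    have hmem : (0:ℝ) ∈ Set.Ico (0:ℝ) (1/2) := ⟨le_refl 0, by norm_num⟩
    filter_upwards [Ioo_mem_nhdsGT_of_mem hmem] with δ hδ
    exact main δ hδ
  · -- support
    refine ⟨1/2, by norm_num, fun δ hδ0 hδ2 => ?_⟩
    have h1 : tsupport (fun x => Sdelta δ (x + 1 - δ) - 2 * Sdelta δ x + Sdelta δ (x - 1 + δ)) ⊆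
        Set.Icc (-1 : ℝ) 1 := by
      refine closure_minimal ?_ isClosed_Icc
      intro x hx
      rw [Function.mem_support] at hx
      by_contra hxI
      apply hx
      simp only [Set.mem_Icc, not_and_or, not_le] at hxI
      rcases hxI with h | h
      · rw [sdelta_zero hδ0 (by linarith), sdelta_zero hδ0 (by linarith),
          sdelta_zero hδ0 (by linarith)]
        ring
      · rw [sdelta_lin hδ0 (by linarith), sdelta_lin hδ0 (by linarith),
          sdelta_lin hδ0 (by linarith)]
        ring
    have h2 : Set.Icc (-1 : ℝ) 1 ⊆ tsupport hatFn := by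
      have hsub : Set.Ioo (-1 : ℝ) 1 ⊆ Function.support hatFn := by
        intro x hx
        rw [Function.mem_support]
        unfold hatFn
        have habs : |x| < 1 := abs_lt.mpr ⟨hx.1, hx.2⟩
        rw [if_pos habs.le]
        intro hcontra
        linarith
      calc Set.Icc (-1 : ℝ) 1 = closure (Set.Ioo (-1 : ℝ) 1) := (closure_Ioo (by norm_num)).symm
        _ ⊆ closure (Function.support hatFn) := closure_mono hsub
        _ = tsupport hatFn := rfl
    exact h1.trans h2
end
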